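/- For probability measures μ, ν on ℝ, μ ⪯_c ν (convex order) holds if and only if u_μ(x) ≤ u_ν(x) for all x ∈ ℝ and μ, ν have the same mean, where u_α(x) := ∫|x−y| dα(y). -/

import Mathlib

open MeasureTheory Set Filter Topology
open scoped ENNReal NNReal

namespace CvxAux

variable {φ : ℝ → ℝ}

/-- A choice of right derivative for a convex function. -/
noncomputable def rd (φ : ℝ → ℝ) (t : ℝ) : ℝ :=
  sInf ((fun y => (φ y - φ t) / (y - t)) '' Ioi t)

lemma slope_slope (hφ : ConvexOn ℝ Set.univ φ) {x t y : ℝ} (hxt : x < t) (hty : t < y) :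
    (φ t - φ x) / (t - x) ≤ (φ y - φ t) / (y - t) :=
  hφ.slope_mono_adjacent (mem_univ x) (mem_univ y) hxt hty

lemma rd_bddBelow (hφ : ConvexOn ℝ Set.univ φ) (t : ℝ) :
    BddBelow ((fun y => (φ y - φ t) / (y - t)) '' Ioi t) := by
  refine ⟨(φ t - φ (t - 1)) / (t - (t - 1)), ?_⟩
  rintro _ ⟨y, hy, rfl⟩
  exact slope_slope hφ (by linarith) hy

lemma rd_le_slope (hφ : ConvexOn ℝ Set.univ φ) {t y : ℝ} (h : t < y) :
    rd φ t ≤ (φ y - φ t) / (y - t) :=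
  csInf_le (rd_bddBelow hφ t) ⟨y, h, rfl⟩

lemma slope_le_rd (hφ : ConvexOn ℝ Set.univ φ) {x t : ℝ} (h : x < t) :
    (φ t - φ x) / (t - x) ≤ rd φ t := by
  refine le_csInf ⟨_, ⟨t + 1, by simp, rfl⟩⟩ ?_
  rintro _ ⟨y, hy, rfl⟩
  exact slope_slope hφ h hy

lemma rd_mono (hφ : ConvexOn ℝ Set.univ φ) : Monotone (rd φ) := by
  intro t u htu
  rcases eq_or_lt_of_le htu with rfl | h
  · exact le_rfl
  · exact (rd_le_slope hφ h).trans (slope_le_rd hφ h)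


lemma rd_ftc (hφ : ConvexOn ℝ Set.univ φ) {a b : ℝ} (hab : a ≤ b) :
    ∫ t in a..b, rd φ t = φ b - φ a := by
  have hcont : Continuous φ := continuousOn_univ.1 (hφ.continuousOn isOpen_univ)
  set Φ : ℝ → ℝ := fun x => ∫ t in (0:ℝ)..x, φ t with hΦdef
  have hΦder : ∀ x : ℝ, HasDerivAt Φ (φ x) x := fun x =>
    (hcont.integral_hasStrictDerivAt 0 x).hasDerivAt
  have key : ∀ x : ℝ, Tendsto (fun h : ℝ => (Φ (x + h) - Φ x) / h) (𝓝[≠] (0:ℝ)) (𝓝 (φ x)) := by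
    intro x
    have h1 := hasDerivAt_iff_tendsto_slope.mp (hΦder x)
    have h2 : Tendsto (fun h : ℝ => x + h) (𝓝[≠] (0:ℝ)) (𝓝[≠] x) := by
      rw [tendsto_nhdsWithin_iff]
      constructor
      · simpa using ((continuous_add_left x).tendsto (0:ℝ)).mono_left
          nhdsWithin_le_nhds
      · filter_upwards [self_mem_nhdsWithin] with h hh
        simpa using hh
    have h3 := h1.comp h2
    refine h3.congr fun h => ?_
    simp [Function.comp, slope_def_field]
  have hint : ∀ u v : ℝ, ∫ t in u..v, φ t = Φ v - Φ u := by
    intro u v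
    have h2 : Φ u + ∫ t in u..v, φ t = Φ v :=
      intervalIntegral.integral_add_adjacent_intervals
        (hcont.intervalIntegrable 0 u) (hcont.intervalIntegrable u v)
    linarith
  set g : ℝ → ℝ := fun h => ((Φ (b + h) - Φ b) - (Φ (a + h) - Φ a)) / h with hgdef
  have hg : Tendsto g (𝓝[≠] (0:ℝ)) (𝓝 (φ b - φ a)) := by
    have h := (key b).sub (key a)
    refine h.congr fun h => ?_
    simp only [hgdef, sub_div]
  have hrdint : IntervalIntegrable (rd φ) volume a b := (rd_mono hφ).intervalIntegrable
  have hshift : ∀ h : ℝ, IntervalIntegrable (fun t : ℝ => φ (t + h)) volume a b := fun h =>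
    (hcont.comp (continuous_id.add continuous_const)).intervalIntegrable _ _
  have hdiff : ∀ h : ℝ, IntervalIntegrable (fun t : ℝ => (φ (t + h) - φ t) / h) volume a b :=
    fun h => (((hcont.comp (continuous_id.add continuous_const)).sub hcont).div_const
      h).intervalIntegrable _ _
  have hcalc : ∀ h : ℝ, ∫ t in a..b, (φ (t + h) - φ t) / h = g h := by
    intro h
    rw [intervalIntegral.integral_div,
      intervalIntegral.integral_sub (hshift h) (hcont.intervalIntegrable _ _),
      intervalIntegral.integral_comp_add_right (fun t => φ t) h, hint, hint]
    simp only [hgdef]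
    ring
  have hub : ∀ h : ℝ, 0 < h → (∫ t in a..b, rd φ t) ≤ g h := by
    intro h hh
    rw [← hcalc h]
    refine intervalIntegral.integral_mono_on hab hrdint (hdiff h) ?_
    intro t _
    have h1 := rd_le_slope hφ (show t < t + h by linarith)
    rwa [add_sub_cancel_left] at h1
  have hlb : ∀ h : ℝ, h < 0 → g h ≤ ∫ t in a..b, rd φ t := by
    intro h hh
    rw [← hcalc h]
    refine intervalIntegral.integral_mono_on hab (hdiff h) hrdint ?_
    intro t _
    have h1 := slope_le_rd hφ (show t + h < t by linarith)
    rwa [show φ t - φ (t + h) = -(φ (t + h) - φ t) by ring,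
      show t - (t + h) = -h by ring, neg_div_neg_eq] at h1
  have hba : Tendsto g (𝓝[>] (0:ℝ)) (𝓝 (φ b - φ a)) :=
    hg.mono_left (nhdsWithin_mono 0 fun x hx => by simpa using ne_of_gt hx)
  have hba' : Tendsto g (𝓝[<] (0:ℝ)) (𝓝 (φ b - φ a)) :=
    hg.mono_left (nhdsWithin_mono 0 fun x hx => by simpa using ne_of_lt hx)
  have h1 : (∫ t in a..b, rd φ t) ≤ φ b - φ a :=
    ge_of_tendsto hba (eventually_nhdsWithin_of_forall fun h hh => hub h hh)
  have h2 : φ b - φ a ≤ ∫ t in a..b, rd φ t :=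
    le_of_tendsto hba' (eventually_nhdsWithin_of_forall fun h hh => hlb h hh)
  linarith


lemma kernel_meas_pos :
    Measurable (Function.uncurry fun t s : ℝ => (Ioc (0:ℝ) t).indicator (fun _ => (1:ℝ≥0∞)) s) := by
  have heq : (Function.uncurry fun t s : ℝ => (Ioc (0:ℝ) t).indicator (fun _ => (1:ℝ≥0∞)) s)
      = ({p : ℝ × ℝ | 0 < p.2 ∧ p.2 ≤ p.1}).indicator (fun _ => (1:ℝ≥0∞)) := by
    ext p
    by_cases h : 0 < p.2 ∧ p.2 ≤ p.1 <;>
      simp [Function.uncurry, Set.indicator_apply, Set.mem_Ioc, h]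
  rw [heq]
  exact measurable_const.indicator
    ((measurableSet_lt measurable_const measurable_snd).inter
      (measurableSet_le measurable_snd measurable_fst))

lemma kernel_meas_neg :
    Measurable (Function.uncurry fun t s : ℝ => (Ioc t (0:ℝ)).indicator (fun _ => (1:ℝ≥0∞)) s) := by
  have heq : (Function.uncurry fun t s : ℝ => (Ioc t (0:ℝ)).indicator (fun _ => (1:ℝ≥0∞)) s)
      = ({p : ℝ × ℝ | p.1 < p.2 ∧ p.2 ≤ 0}).indicator (fun _ => (1:ℝ≥0∞)) := by
    ext p
    by_cases h : p.1 < p.2 ∧ p.2 ≤ 0 <;>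
      simp [Function.uncurry, Set.indicator_apply, Set.mem_Ioc, h]
  rw [heq]
  exact measurable_const.indicator
    ((measurableSet_lt measurable_fst measurable_snd).inter
      (measurableSet_le measurable_snd measurable_const))

lemma swap_pos (M : Measure ℝ) [SigmaFinite M] (y : ℝ) :
    ∫⁻ t in Ioc (0:ℝ) y, M (Ioc 0 t) ∂volume
      = ∫⁻ s in Ioi (0:ℝ), ENNReal.ofReal (y - s) ∂M := by
  have h0 : ∀ t : ℝ, M (Ioc 0 t)
      = ∫⁻ s, (Ioc (0:ℝ) t).indicator (fun _ => (1:ℝ≥0∞)) s ∂M := by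
    intro t
    rw [lintegral_indicator measurableSet_Ioc, setLIntegral_one]
  calc ∫⁻ t in Ioc (0:ℝ) y, M (Ioc 0 t) ∂volume
      = ∫⁻ t in Ioc (0:ℝ) y, ∫⁻ s, (Ioc (0:ℝ) t).indicator (fun _ => (1:ℝ≥0∞)) s ∂M ∂volume :=
        lintegral_congr h0
    _ = ∫⁻ s, ∫⁻ t in Ioc (0:ℝ) y,
          (Ioc (0:ℝ) t).indicator (fun _ => (1:ℝ≥0∞)) s ∂volume ∂M :=
        lintegral_lintegral_swap kernel_meas_pos.aemeasurable
    _ = ∫⁻ s, (Ioi (0:ℝ)).indicator (fun s => ENNReal.ofReal (y - s)) s ∂M := by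
        refine lintegral_congr fun s => ?_
        by_cases hs : 0 < s
        · have heq : ∀ t : ℝ, (Ioc (0:ℝ) t).indicator (fun _ => (1:ℝ≥0∞)) s
              = (Ici s).indicator (fun _ => (1:ℝ≥0∞)) t := by
            intro t
            by_cases h : s ≤ t <;>
              simp [Set.indicator_apply, Set.mem_Ioc, Set.mem_Ici, h, hs]
          rw [lintegral_congr heq, lintegral_indicator measurableSet_Ici,
            Measure.restrict_restrict measurableSet_Ici, setLIntegral_one]
          have hset : Ici s ∩ Ioc 0 y = Icc s y := by
            ext t
            simp only [Set.mem_inter_iff, Set.mem_Ici, Set.mem_Ioc, Set.mem_Icc]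
            exact ⟨fun h => ⟨h.1, h.2.2⟩, fun h => ⟨h.1, lt_of_lt_of_le hs h.1, h.2⟩⟩
          rw [hset, Real.volume_Icc, Set.indicator_of_mem (by exact hs)]
        · have heq : ∀ t : ℝ, (Ioc (0:ℝ) t).indicator (fun _ => (1:ℝ≥0∞)) s = 0 := by
            intro t
            simp [Set.indicator_apply, Set.mem_Ioc, hs]
          simp [heq, Set.indicator_of_notMem, hs]
    _ = ∫⁻ s in Ioi (0:ℝ), ENNReal.ofReal (y - s) ∂M :=
        lintegral_indicator measurableSet_Ioi _

lemma swap_neg (M : Measure ℝ) [SigmaFinite M] (y : ℝ) :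
    ∫⁻ t in Ioc y (0:ℝ), M (Ioc t 0) ∂volume
      = ∫⁻ s in Iic (0:ℝ), ENNReal.ofReal (s - y) ∂M := by
  have h0 : ∀ t : ℝ, M (Ioc t 0)
      = ∫⁻ s, (Ioc t (0:ℝ)).indicator (fun _ => (1:ℝ≥0∞)) s ∂M := by
    intro t
    rw [lintegral_indicator measurableSet_Ioc, setLIntegral_one]
  calc ∫⁻ t in Ioc y (0:ℝ), M (Ioc t 0) ∂volume
      = ∫⁻ t in Ioc y (0:ℝ), ∫⁻ s, (Ioc t (0:ℝ)).indicator (fun _ => (1:ℝ≥0∞)) s ∂M ∂volume :=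
        lintegral_congr h0
    _ = ∫⁻ s, ∫⁻ t in Ioc y (0:ℝ),
          (Ioc t (0:ℝ)).indicator (fun _ => (1:ℝ≥0∞)) s ∂volume ∂M :=
        lintegral_lintegral_swap kernel_meas_neg.aemeasurable
    _ = ∫⁻ s, (Iic (0:ℝ)).indicator (fun s => ENNReal.ofReal (s - y)) s ∂M := by
        refine lintegral_congr fun s => ?_
        by_cases hs : s ≤ 0
        · have heq : ∀ t : ℝ, (Ioc t (0:ℝ)).indicator (fun _ => (1:ℝ≥0∞)) s
              = (Iio s).indicator (fun _ => (1:ℝ≥0∞)) t := by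
            intro t
            by_cases h : t < s <;>
              simp [Set.indicator_apply, Set.mem_Ioc, Set.mem_Iio, h, hs]
          rw [lintegral_congr heq, lintegral_indicator measurableSet_Iio,
            Measure.restrict_restrict measurableSet_Iio, setLIntegral_one]
          have hset : Iio s ∩ Ioc y 0 = Ioo y s := by
            ext t
            simp only [Set.mem_inter_iff, Set.mem_Iio, Set.mem_Ioc, Set.mem_Ioo]
            exact ⟨fun h => ⟨h.2.1, h.1⟩, fun h => ⟨h.2, h.1, le_trans (le_of_lt h.2) hs⟩⟩
          rw [hset, Real.volume_Ioo, Set.indicator_of_mem (by exact hs)]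
        · have heq : ∀ t : ℝ, (Ioc t (0:ℝ)).indicator (fun _ => (1:ℝ≥0∞)) s = 0 := by
            intro t
            simp [Set.indicator_apply, Set.mem_Ioc, hs]
          simp [heq, Set.indicator_of_notMem, hs]
    _ = ∫⁻ s in Iic (0:ℝ), ENNReal.ofReal (s - y) ∂M :=
        lintegral_indicator measurableSet_Iic _


lemma rep (hφ : ConvexOn ℝ Set.univ φ) (y : ℝ) :
    φ y - φ 0 - (rd_mono hφ).stieltjesFunction 0 * y
      = ((∫⁻ s in Ioi (0:ℝ), ENNReal.ofReal (y - s) ∂(rd_mono hφ).stieltjesFunction.measure)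
          + ∫⁻ s in Iic (0:ℝ), ENNReal.ofReal (s - y)
              ∂(rd_mono hφ).stieltjesFunction.measure).toReal
    ∧ ((∫⁻ s in Ioi (0:ℝ), ENNReal.ofReal (y - s) ∂(rd_mono hφ).stieltjesFunction.measure)
          + ∫⁻ s in Iic (0:ℝ), ENNReal.ofReal (s - y)
              ∂(rd_mono hφ).stieltjesFunction.measure) ≠ ⊤ := by
  set γ := (rd_mono hφ).stieltjesFunction with hγdef
  set M := γ.measure with hMdef
  have hae : ∀ᵐ t ∂(volume : Measure ℝ), rd φ t = γ t := by
    have hc : Set.Countable {t : ℝ | ¬ContinuousAt (rd φ) t} :=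
      (rd_mono hφ).countable_not_continuousAt
    rw [ae_iff]
    refine measure_mono_null (fun t ht => ?_) (hc.measure_zero volume)
    simp only [Set.mem_setOf_eq] at ht ⊢
    intro hcont
    have hne : (𝓝[>] t) ≠ ⊥ := (inferInstance : (𝓝[>] t).NeBot).ne'
    exact ht (rightLim_eq_of_tendsto
      (hcont.tendsto.mono_left nhdsWithin_le_nhds)).symm
  have hMfin : ∀ a b : ℝ, M (Ioc a b) ≠ ⊤ := fun a b => by
    rw [hMdef, StieltjesFunction.measure_Ioc]; exact ENNReal.ofReal_ne_top
  rcases le_or_gt 0 y with hy | hy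
  · -- y ≥ 0
    have hB0 : ∫⁻ s in Iic (0:ℝ), ENNReal.ofReal (s - y) ∂M = 0 := by
      have h : ∀ᵐ s ∂(M.restrict (Iic 0)), ENNReal.ofReal (s - y) = 0 := by
        filter_upwards [ae_restrict_mem measurableSet_Iic] with s hs
        exact ENNReal.ofReal_eq_zero.mpr
          (by simp only [Set.mem_Iic] at hs; linarith)
      rw [lintegral_congr_ae h]
      exact lintegral_zero
    have hmt_mono : Monotone (fun t : ℝ => (M (Ioc 0 t)).toReal) := fun t t' h =>
      ENNReal.toReal_mono (hMfin 0 t') (measure_mono (Ioc_subset_Ioc_right h))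
    have h1 : ∫ t in (0:ℝ)..y, rd φ t = φ y - φ 0 := rd_ftc hφ hy
    have h2 : ∫ t in (0:ℝ)..y, rd φ t = ∫ t in (0:ℝ)..y, γ t := by
      refine intervalIntegral.integral_congr_ae ?_
      filter_upwards [hae] with t ht
      exact fun _ => ht
    have h3 : ∫ t in (0:ℝ)..y, γ t
        = ∫ t in (0:ℝ)..y, (γ 0 + (M (Ioc 0 t)).toReal) := by
      refine intervalIntegral.integral_congr fun t ht => ?_
      rw [Set.uIcc_of_le hy] at ht
      rw [hMdef, StieltjesFunction.measure_Ioc,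
        ENNReal.toReal_ofReal (sub_nonneg.mpr (γ.mono ht.1))]
      ring
    have h4 : ∫ t in (0:ℝ)..y, (γ 0 + (M (Ioc 0 t)).toReal)
        = γ 0 * y + ∫ t in (0:ℝ)..y, (M (Ioc 0 t)).toReal := by
      rw [intervalIntegral.integral_add intervalIntegrable_const
        hmt_mono.intervalIntegrable]
      simp [mul_comm]
    have h5 : ∫ t in (0:ℝ)..y, (M (Ioc 0 t)).toReal
        = (∫⁻ t in Ioc (0:ℝ) y, M (Ioc 0 t) ∂volume).toReal := by
      rw [intervalIntegral.integral_of_le hy]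
      exact integral_toReal
        ((Monotone.measurable
          (fun t t' h => measure_mono (Ioc_subset_Ioc_right h))).aemeasurable)
        (ae_of_all _ fun t => (hMfin 0 t).lt_top)
    have hfin : ∫⁻ t in Ioc (0:ℝ) y, M (Ioc 0 t) ∂volume ≠ ⊤ := by
      refine ne_top_of_le_ne_top ?_ (setLIntegral_mono' measurableSet_Ioc
        fun t ht => measure_mono (Ioc_subset_Ioc_right ht.2))
      rw [setLIntegral_const]
      exact ENNReal.mul_ne_top (hMfin 0 y)
        (by rw [Real.volume_Ioc]; exact ENNReal.ofReal_ne_top)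
    constructor
    · rw [hB0, add_zero, ← swap_pos M y]
      rw [← h1, h2, h3, h4, h5]
      ring
    · rw [hB0, add_zero, ← swap_pos M y]
      exact hfin
  · -- y < 0
    have hB0 : ∫⁻ s in Ioi (0:ℝ), ENNReal.ofReal (y - s) ∂M = 0 := by
      have h : ∀ᵐ s ∂(M.restrict (Ioi 0)), ENNReal.ofReal (y - s) = 0 := by
        filter_upwards [ae_restrict_mem measurableSet_Ioi] with s hs
        exact ENNReal.ofReal_eq_zero.mpr
          (by simp only [Set.mem_Ioi] at hs; linarith)
      rw [lintegral_congr_ae h]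
      exact lintegral_zero
    have hmt_anti : Antitone (fun t : ℝ => (M (Ioc t 0)).toReal) := fun t t' h =>
      ENNReal.toReal_mono (hMfin t 0) (measure_mono (Ioc_subset_Ioc_left h))
    have h1 : ∫ t in y..(0:ℝ), rd φ t = φ 0 - φ y := rd_ftc hφ hy.le
    have h2 : ∫ t in y..(0:ℝ), rd φ t = ∫ t in y..(0:ℝ), γ t := by
      refine intervalIntegral.integral_congr_ae ?_
      filter_upwards [hae] with t ht
      exact fun _ => ht
    have h3 : ∫ t in y..(0:ℝ), γ t
        = ∫ t in y..(0:ℝ), (γ 0 - (M (Ioc t 0)).toReal) := by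
      refine intervalIntegral.integral_congr fun t ht => ?_
      rw [Set.uIcc_of_le hy.le] at ht
      rw [hMdef, StieltjesFunction.measure_Ioc,
        ENNReal.toReal_ofReal (sub_nonneg.mpr (γ.mono ht.2))]
      ring
    have h4 : ∫ t in y..(0:ℝ), (γ 0 - (M (Ioc t 0)).toReal)
        = -(γ 0 * y) - ∫ t in y..(0:ℝ), (M (Ioc t 0)).toReal := by
      rw [intervalIntegral.integral_sub intervalIntegrable_const
        hmt_anti.intervalIntegrable]
      simp
      ring
    have h5 : ∫ t in y..(0:ℝ), (M (Ioc t 0)).toReal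
        = (∫⁻ t in Ioc y (0:ℝ), M (Ioc t 0) ∂volume).toReal := by
      rw [intervalIntegral.integral_of_le hy.le]
      exact integral_toReal
        ((Antitone.measurable
          (fun t t' h => measure_mono (Ioc_subset_Ioc_left h))).aemeasurable)
        (ae_of_all _ fun t => (hMfin t 0).lt_top)
    have hfin : ∫⁻ t in Ioc y (0:ℝ), M (Ioc t 0) ∂volume ≠ ⊤ := by
      refine ne_top_of_le_ne_top ?_ (setLIntegral_mono' measurableSet_Ioc
        fun t ht => measure_mono (Ioc_subset_Ioc_left ht.1.le))
      rw [setLIntegral_const]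
      exact ENNReal.mul_ne_top (hMfin y 0)
        (by rw [Real.volume_Ioc]; exact ENNReal.ofReal_ne_top)
    constructor
    · rw [hB0, zero_add, ← swap_neg M y]
      have h6 := h1
      rw [h2, h3, h4, h5] at h6
      linarith
    · rw [hB0, zero_add, ← swap_neg M y]
      exact hfin


lemma max_formula (a : ℝ) : max a 0 = (a + |a|) / 2 := by
  rcases le_total 0 a with h | h
  · rw [abs_of_nonneg h, max_eq_left h]; ring
  · rw [abs_of_nonpos h, max_eq_right h]; ring

lemma ofReal_eq_ofReal_max (a : ℝ) : ENNReal.ofReal a = ENNReal.ofReal (max a 0) := by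
  rcases le_total a 0 with h | h
  · rw [max_eq_right h, ENNReal.ofReal_of_nonpos h, ENNReal.ofReal_zero]
  · rw [max_eq_left h]

lemma main_le (μ ν : Measure ℝ) [IsProbabilityMeasure μ] [IsProbabilityMeasure ν]
    (hμ : Integrable (fun x => x) μ) (hν : Integrable (fun x => x) ν)
    (hpot : ∀ x : ℝ, ∫ y, |x - y| ∂μ ≤ ∫ y, |x - y| ∂ν)
    (hmean : ∫ y, y ∂μ = ∫ y, y ∂ν)
    (φ : ℝ → ℝ) (hφ : ConvexOn ℝ Set.univ φ)
    (hφμ : Integrable φ μ) (hφν : Integrable φ ν) :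
    ∫ x, φ x ∂μ ≤ ∫ x, φ x ∂ν := by
  set M := (rd_mono hφ).stieltjesFunction.measure with hMdef
  set c := (rd_mono hφ).stieltjesFunction 0 with hcdef
  set K : ℝ → ℝ≥0∞ := fun y =>
    (∫⁻ s in Ioi (0:ℝ), ENNReal.ofReal (y - s) ∂M)
      + ∫⁻ s in Iic (0:ℝ), ENNReal.ofReal (s - y) ∂M with hKdef
  have hrep : ∀ y : ℝ, φ y - φ 0 - c * y = (K y).toReal ∧ K y ≠ ⊤ := rep hφ
  set R : ℝ → ℝ := fun y => φ y - φ 0 - c * y with hRdef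
  have hRnn : ∀ y, 0 ≤ R y := fun y => by
    rw [hRdef]; simp only []; rw [(hrep y).1]; exact ENNReal.toReal_nonneg
  have hRμ : Integrable R μ := (hφμ.sub (integrable_const (φ 0))).sub (hμ.const_mul c)
  have hRν : Integrable R ν := (hφν.sub (integrable_const (φ 0))).sub (hν.const_mul c)
  -- pointwise potential comparison for hockey sticks
  have hval1 : ∀ (ρ : Measure ℝ) [IsProbabilityMeasure ρ], Integrable (fun x => x) ρ →
      ∀ s : ℝ, (∫⁻ x, ENNReal.ofReal (x - s) ∂ρ)
        = ENNReal.ofReal (((∫ x, x ∂ρ) - s + ∫ x, |s - x| ∂ρ) / 2) := by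
    intro ρ _ hρ s
    have hg : (fun x : ℝ => max (x - s) 0) = fun x => ((x - s) + |x - s|) / 2 :=
      funext fun x => max_formula (x - s)
    have hgi : Integrable (fun x : ℝ => max (x - s) 0) ρ := by
      rw [hg]
      exact ((hρ.sub (integrable_const s)).add (hρ.sub (integrable_const s)).abs).div_const 2
    have h1 : ∫⁻ x, ENNReal.ofReal (x - s) ∂ρ
        = ∫⁻ x, ENNReal.ofReal (max (x - s) 0) ∂ρ :=
      lintegral_congr fun x => ofReal_eq_ofReal_max _
    rw [h1, ← ofReal_integral_eq_lintegral_ofReal hgi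
      (ae_of_all _ fun x => le_max_right _ _)]
    congr 1
    have i1 : Integrable (fun x : ℝ => x - s) ρ := hρ.sub (integrable_const s)
    rw [hg, integral_div, integral_add i1 i1.abs, integral_sub hρ (integrable_const s),
      integral_const]
    simp only [measure_univ, probReal_univ, ENNReal.toReal_one, one_smul]
    have habs : ∫ x, |x - s| ∂ρ = ∫ x, |s - x| ∂ρ := by
      simp_rw [abs_sub_comm]
    rw [habs]
  have hval2 : ∀ (ρ : Measure ℝ) [IsProbabilityMeasure ρ], Integrable (fun x => x) ρ →
      ∀ s : ℝ, (∫⁻ x, ENNReal.ofReal (s - x) ∂ρ)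
        = ENNReal.ofReal ((s - (∫ x, x ∂ρ) + ∫ x, |s - x| ∂ρ) / 2) := by
    intro ρ _ hρ s
    have hg : (fun x : ℝ => max (s - x) 0) = fun x => ((s - x) + |s - x|) / 2 :=
      funext fun x => max_formula (s - x)
    have hgi : Integrable (fun x : ℝ => max (s - x) 0) ρ := by
      rw [hg]
      exact (((integrable_const s).sub hρ).add ((integrable_const s).sub hρ).abs).div_const 2
    have h1 : ∫⁻ x, ENNReal.ofReal (s - x) ∂ρ
        = ∫⁻ x, ENNReal.ofReal (max (s - x) 0) ∂ρ :=
      lintegral_congr fun x => ofReal_eq_ofReal_max _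
    rw [h1, ← ofReal_integral_eq_lintegral_ofReal hgi
      (ae_of_all _ fun x => le_max_right _ _)]
    congr 1
    have i1 : Integrable (fun x : ℝ => s - x) ρ := (integrable_const s).sub hρ
    rw [hg, integral_div, integral_add i1 i1.abs, integral_sub (integrable_const s) hρ,
      integral_const]
    simp only [measure_univ, probReal_univ, ENNReal.toReal_one, one_smul]
  have hcomp1 : ∀ s : ℝ, (∫⁻ x, ENNReal.ofReal (x - s) ∂μ)
      ≤ ∫⁻ x, ENNReal.ofReal (x - s) ∂ν := by
    intro s
    rw [hval1 μ hμ s, hval1 ν hν s]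
    exact ENNReal.ofReal_le_ofReal (by have := hpot s; linarith)
  have hcomp2 : ∀ s : ℝ, (∫⁻ x, ENNReal.ofReal (s - x) ∂μ)
      ≤ ∫⁻ x, ENNReal.ofReal (s - x) ∂ν := by
    intro s
    rw [hval2 μ hμ s, hval2 ν hν s]
    exact ENNReal.ofReal_le_ofReal (by have := hpot s; linarith)
  -- swap and compare
  have hmeas1 : Measurable (Function.uncurry fun y s : ℝ => ENNReal.ofReal (y - s)) :=
    (measurable_fst.sub measurable_snd).ennreal_ofReal
  have hmeas2 : Measurable (Function.uncurry fun y s : ℝ => ENNReal.ofReal (s - y)) :=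
    (measurable_snd.sub measurable_fst).ennreal_ofReal
  have hA : (∫⁻ y, ∫⁻ s in Ioi (0:ℝ), ENNReal.ofReal (y - s) ∂M ∂μ)
      ≤ ∫⁻ y, ∫⁻ s in Ioi (0:ℝ), ENNReal.ofReal (y - s) ∂M ∂ν := by
    rw [lintegral_lintegral_swap hmeas1.aemeasurable,
      lintegral_lintegral_swap hmeas1.aemeasurable]
    exact lintegral_mono fun s => hcomp1 s
  have hB : (∫⁻ y, ∫⁻ s in Iic (0:ℝ), ENNReal.ofReal (s - y) ∂M ∂μ)
      ≤ ∫⁻ y, ∫⁻ s in Iic (0:ℝ), ENNReal.ofReal (s - y) ∂M ∂ν := by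
    rw [lintegral_lintegral_swap hmeas2.aemeasurable,
      lintegral_lintegral_swap hmeas2.aemeasurable]
    exact lintegral_mono fun s => hcomp2 s
  have hmeasA : Measurable fun y => ∫⁻ s in Ioi (0:ℝ), ENNReal.ofReal (y - s) ∂M :=
    Measurable.lintegral_prod_right hmeas1
  have hK : (∫⁻ y, K y ∂μ) ≤ ∫⁻ y, K y ∂ν := by
    simp only [hKdef]
    rw [lintegral_add_left hmeasA, lintegral_add_left hmeasA]
    exact add_le_add hA hB
  have hofμ : ENNReal.ofReal (∫ y, R y ∂μ) = ∫⁻ y, K y ∂μ := by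
    rw [ofReal_integral_eq_lintegral_ofReal hRμ (ae_of_all _ hRnn)]
    refine lintegral_congr fun y => ?_
    rw [show R y = (K y).toReal from (hrep y).1]
    exact ENNReal.ofReal_toReal (hrep y).2
  have hofν : ENNReal.ofReal (∫ y, R y ∂ν) = ∫⁻ y, K y ∂ν := by
    rw [ofReal_integral_eq_lintegral_ofReal hRν (ae_of_all _ hRnn)]
    refine lintegral_congr fun y => ?_
    rw [show R y = (K y).toReal from (hrep y).1]
    exact ENNReal.ofReal_toReal (hrep y).2
  have hRcomp : ∫ y, R y ∂μ ≤ ∫ y, R y ∂ν := by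
    have h := hK
    rw [← hofμ, ← hofν] at h
    exact (ENNReal.ofReal_le_ofReal_iff (integral_nonneg hRnn)).mp h
  have iφ0μ : Integrable (fun y : ℝ => φ y - φ 0) μ := hφμ.sub (integrable_const (φ 0))
  have iφ0ν : Integrable (fun y : ℝ => φ y - φ 0) ν := hφν.sub (integrable_const (φ 0))
  have icyμ : Integrable (fun y : ℝ => c * y) μ := hμ.const_mul c
  have icyν : Integrable (fun y : ℝ => c * y) ν := hν.const_mul c
  have hμeq : ∫ y, R y ∂μ = (∫ x, φ x ∂μ) - φ 0 - c * ∫ x, x ∂μ := by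
    rw [hRdef]
    rw [integral_sub iφ0μ icyμ, integral_sub hφμ (integrable_const (φ 0)),
      integral_const, integral_const_mul]
    simp [measure_univ]
  have hνeq : ∫ y, R y ∂ν = (∫ x, φ x ∂ν) - φ 0 - c * ∫ x, x ∂ν := by
    rw [hRdef]
    rw [integral_sub iφ0ν icyν, integral_sub hφν (integrable_const (φ 0)),
      integral_const, integral_const_mul]
    simp [measure_univ]
  rw [hμeq, hνeq, hmean] at hRcomp
  linarith

end CvxAux

open CvxAux in
/-- For probability measures on `ℝ` with finite first moments, convex order holds iff the
potential functions `u_α(x) = ∫|x-y| dα(y)` are ordered and the means coincide. -/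
theorem stmt1 (μ ν : Measure ℝ) [IsProbabilityMeasure μ] [IsProbabilityMeasure ν]
    (hμ : Integrable (fun x => x) μ) (hν : Integrable (fun x => x) ν) :
    (∀ φ : ℝ → ℝ, ConvexOn ℝ Set.univ φ → Integrable φ μ → Integrable φ ν →
        ∫ x, φ x ∂μ ≤ ∫ x, φ x ∂ν)
      ↔ ((∀ x : ℝ, ∫ y, |x - y| ∂μ ≤ ∫ y, |x - y| ∂ν) ∧ (∫ y, y ∂μ = ∫ y, y ∂ν)) := by
  constructor
  · intro H
    constructor
    · intro x
      have hconv : ConvexOn ℝ Set.univ (fun y : ℝ => |x - y|) := by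
        refine ⟨convex_univ, fun y _ z _ a b ha hb hab => ?_⟩
        have h1 : x - (a • y + b • z) = a • (x - y) + b • (x - z) := by
          simp only [smul_eq_mul]
          linear_combination (-x) * hab
        calc |x - (a • y + b • z)| = |a • (x - y) + b • (x - z)| := by rw [h1]
          _ ≤ |a • (x - y)| + |b • (x - z)| := abs_add_le _ _
          _ = a • |x - y| + b • |x - z| := by
              simp only [smul_eq_mul, abs_mul, abs_of_nonneg ha, abs_of_nonneg hb]
      have hiμ : Integrable (fun y : ℝ => |x - y|) μ := ((integrable_const x).sub hμ).abs
      have hiν : Integrable (fun y : ℝ => |x - y|) ν := ((integrable_const x).sub hν).abs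
      exact H _ hconv hiμ hiν
    · have hid : ConvexOn ℝ Set.univ (fun x : ℝ => x) := by
        refine ⟨convex_univ, fun y _ z _ a b _ _ _ => le_of_eq ?_⟩
        simp [smul_eq_mul]
      have hneg : ConvexOn ℝ Set.univ (fun x : ℝ => -x) := by
        refine ⟨convex_univ, fun y _ z _ a b _ _ _ => le_of_eq ?_⟩
        simp [smul_eq_mul]
        ring
      have hμn : Integrable (fun x : ℝ => -x) μ := hμ.neg
      have hνn : Integrable (fun x : ℝ => -x) ν := hν.neg
      have h1 := H _ hid hμ hν
      have h2 := H _ hneg hμn hνn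
      rw [integral_neg, integral_neg] at h2
      linarith
  · rintro ⟨hpot, hmean⟩ φ hφ hφμ hφν
    exact main_le μ ν hμ hν hpot hmean φ hφ hφμ hφν
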